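/- Let 1 ≤ q ≤ p < ∞, let ω be a weight on ℝⁿ, and let {E_j}_{j≥1} be a collection of measurable sets such that ∑_{j≥1} χ_{E_j}(x) ≤ C for all x. Then ∑_{j≥1} ‖χ_{E_j} f‖_{L^{p,q}(ω)}^p ≤ C' ‖f‖_{L^{p,q}(ω)}^p for some constant C' depending only on C, p, q. -/

import Mathlib

open MeasureTheory Set ENNReal

noncomputable section

/-- The measure `ω(x) dx` on `ℝⁿ`. -/
def wMeas {n : ℕ} (ω : EuclideanSpace ℝ (Fin n) → ℝ≥0∞) :
    Measure (EuclideanSpace ℝ (Fin n)) := volume.withDensity ω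

/-- Distribution function of `f` with respect to the measure `ω dx`. -/
def distFn {n : ℕ} (ω f : EuclideanSpace ℝ (Fin n) → ℝ≥0∞) (s : ℝ≥0∞) : ℝ≥0∞ :=
  wMeas ω {x | s < f x}

/-- Decreasing rearrangement of `f` with respect to `ω dx`. -/
def rearr {n : ℕ} (ω f : EuclideanSpace ℝ (Fin n) → ℝ≥0∞) (t : ℝ≥0∞) : ℝ≥0∞ :=
  sInf {s : ℝ≥0∞ | distFn ω f s ≤ t}

/-- The weighted Lorentz quasinorm `‖f‖_{L^{p,q}(ω)}`; `q = ∞` gives the weak norm. -/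
def lorentzNorm {n : ℕ} (ω : EuclideanSpace ℝ (Fin n) → ℝ≥0∞) (p q : ℝ≥0∞)
    (f : EuclideanSpace ℝ (Fin n) → ℝ≥0∞) : ℝ≥0∞ :=
  if q = ∞ then ⨆ t : {t : ℝ // 0 < t},
      ENNReal.ofReal t.1 ^ (1 / p.toReal) * rearr ω f (ENNReal.ofReal t.1)
  else ((q / p) * ∫⁻ t in Ioi (0:ℝ),
      (ENNReal.ofReal t ^ (1 / p.toReal) * rearr ω f (ENNReal.ofReal t)) ^ q.toReal
        / ENNReal.ofReal t) ^ (1 / q.toReal)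

/-- Axis-parallel cubes in `ℝⁿ`. -/
def IsCube {n : ℕ} (Q : Set (EuclideanSpace ℝ (Fin n))) : Prop :=
  ∃ (c : EuclideanSpace ℝ (Fin n)) (h : ℝ), 0 < h ∧
    Q = {y | ∀ i, |y i - c i| ≤ h}

/-- Conjugate exponent in `ℝ≥0∞`. -/
def conjE (p : ℝ≥0∞) : ℝ≥0∞ := if p = ∞ then 1 else p / (p - 1)

/-- The class `A(p,q)` of weights. -/
def Apq {n : ℕ} (ω : EuclideanSpace ℝ (Fin n) → ℝ≥0∞) (p q : ℝ≥0∞) : Prop :=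
  ∃ C : ℝ≥0∞, 0 < C ∧ C < ∞ ∧ ∀ Q : Set (EuclideanSpace ℝ (Fin n)), IsCube Q →
    lorentzNorm ω p q (Q.indicator 1) *
      lorentzNorm ω (conjE p) (conjE q) (Q.indicator fun x => (ω x)⁻¹) ≤ C * volume Q

/-- The Muckenhoupt class `A_p`. -/
def IsMuckenhouptAp {n : ℕ} (ω : EuclideanSpace ℝ (Fin n) → ℝ≥0∞) (p : ℝ) : Prop :=
  ∃ C : ℝ≥0∞, C < ∞ ∧ ∀ Q : Set (EuclideanSpace ℝ (Fin n)), IsCube Q →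
    ((volume Q)⁻¹ * ∫⁻ x in Q, ω x) *
      ((volume Q)⁻¹ * ∫⁻ x in Q, (ω x) ^ (-(1 / (p - 1)))) ^ (p - 1) ≤ C

/-- Hardy–Littlewood maximal function over centered cubes, `ℝ≥0∞`-valued. -/
def HLMax {n : ℕ} (f : EuclideanSpace ℝ (Fin n) → ℝ≥0∞)
    (x : EuclideanSpace ℝ (Fin n)) : ℝ≥0∞ :=
  ⨆ h : {h : ℝ // 0 < h},
    (volume {y : EuclideanSpace ℝ (Fin n) | ∀ i, |y i - x i| ≤ h.1})⁻¹ *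
      ∫⁻ y in {y : EuclideanSpace ℝ (Fin n) | ∀ i, |y i - x i| ≤ h.1}, f y

/-- `|f⃗(x)|_r = (∑_k |f_k(x)|^r)^{1/r}`. -/
def vecLr {n : ℕ} (r : ℝ) (f : ℕ → EuclideanSpace ℝ (Fin n) → ℝ)
    (x : EuclideanSpace ℝ (Fin n)) : ℝ≥0∞ :=
  (∑' k, ENNReal.ofReal |f k x| ^ r) ^ (1 / r)

/-- `|M(f⃗)(x)|_r = (∑_k (M f_k)(x)^r)^{1/r}`. -/
def vecMaxLr {n : ℕ} (r : ℝ) (f : ℕ → EuclideanSpace ℝ (Fin n) → ℝ)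
    (x : EuclideanSpace ℝ (Fin n)) : ℝ≥0∞ :=
  (∑' k, (HLMax (fun y => ENNReal.ofReal |f k y|) x) ^ r) ^ (1 / r)

end
lemma lint_Ioo {α A : ℝ} (hα : 0 < α) (hA : 0 < A) :
    ∫⁻ t in Ioo (0:ℝ) A, ENNReal.ofReal (t ^ (α - 1)) = ENNReal.ofReal (A ^ α / α) := by
  have hint : IntervalIntegrable (fun t : ℝ => t ^ (α - 1)) volume 0 A :=
    intervalIntegral.intervalIntegrable_rpow' (by linarith)
  have hint' : IntegrableOn (fun t : ℝ => t ^ (α - 1)) (Ioo 0 A) volume :=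
    ((intervalIntegrable_iff_integrableOn_Ioc_of_le hA.le).mp hint).mono_set Ioo_subset_Ioc_self
  rw [← ofReal_integral_eq_lintegral_ofReal hint'
      (ae_restrict_of_forall_mem measurableSet_Ioo fun t ht => Real.rpow_nonneg ht.1.le _)]
  congr 1
  rw [← integral_Ioc_eq_integral_Ioo, ← intervalIntegral.integral_of_le hA.le,
    integral_rpow (Or.inl (by linarith))]
  rw [sub_add_cancel, Real.zero_rpow hα.ne', sub_zero, div_eq_div_iff] <;> ring_nf
  · linarith
  · linarith

lemma lint_Ioi_top {α : ℝ} (hα : 0 < α) :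
    ∫⁻ t in Ioi (0:ℝ), ENNReal.ofReal (t ^ (α - 1)) = ∞ := by
  refine ENNReal.eq_top_of_forall_nnreal_le fun r => ?_
  have hAr : (0:ℝ) < (α * r + 1) ^ (1/α) := Real.rpow_pos_of_pos (by positivity) _
  calc (r:ℝ≥0∞) ≤ ENNReal.ofReal (((α * r + 1) ^ (1/α)) ^ α / α) := by
        rw [one_div, Real.rpow_inv_rpow (by positivity) hα.ne']
        rw [ENNReal.coe_nnreal_eq]
        apply ENNReal.ofReal_le_ofReal
        rw [le_div_iff₀ hα]
        nlinarith [r.coe_nonneg]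
    _ = ∫⁻ t in Ioo (0:ℝ) ((α * r + 1) ^ (1/α)), ENNReal.ofReal (t ^ (α - 1)) :=
        (lint_Ioo hα hAr).symm
    _ ≤ _ := lintegral_mono_set Ioo_subset_Ioi_self

lemma lint_Ioo_ofReal {α A : ℝ} (hα : 0 < α) (hA : 0 < A) :
    ∫⁻ t in Ioo (0:ℝ) A, ENNReal.ofReal (t ^ (α - 1))
      = ENNReal.ofReal A ^ α / ENNReal.ofReal α := by
  rw [lint_Ioo hα hA, ENNReal.ofReal_div_of_pos hα, ← ENNReal.ofReal_rpow_of_pos hA]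

lemma P1le {α : ℝ} (hα : 0 < α) (a : ℝ≥0∞) :
    ∫⁻ t in Ioi (0:ℝ) ∩ {t : ℝ | ENNReal.ofReal t ≤ a}, ENNReal.ofReal (t ^ (α - 1))
      = a ^ α / ENNReal.ofReal α := by
  rcases eq_or_ne a ⊤ with rfl | ha
  · have : Ioi (0:ℝ) ∩ {t : ℝ | ENNReal.ofReal t ≤ ⊤} = Ioi 0 := by simp
    rw [this, lint_Ioi_top hα, ENNReal.top_rpow_of_pos hα, ENNReal.top_div_of_ne_top
      ENNReal.ofReal_ne_top]
  rcases eq_or_ne a 0 with rfl | ha0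
  · have : Ioi (0:ℝ) ∩ {t : ℝ | ENNReal.ofReal t ≤ 0} = ∅ := by
      ext t; simp only [mem_inter_iff, mem_Ioi, mem_setOf_eq, nonpos_iff_eq_zero,
        ENNReal.ofReal_eq_zero, mem_empty_iff_false, iff_false, not_and, not_le]
      exact fun h => h
    rw [this, setLIntegral_empty, ENNReal.zero_rpow_of_pos hα, ENNReal.zero_div]
  have hA : 0 < a.toReal := ENNReal.toReal_pos ha0 ha
  have hset : Ioi (0:ℝ) ∩ {t : ℝ | ENNReal.ofReal t ≤ a} = Ioc 0 a.toReal := by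
    ext t; simp only [mem_inter_iff, mem_Ioi, mem_setOf_eq, mem_Ioc]
    constructor
    · rintro ⟨ht, hle⟩
      exact ⟨ht, by rwa [← ENNReal.ofReal_toReal ha, ENNReal.ofReal_le_ofReal_iff
        ENNReal.toReal_nonneg] at hle⟩
    · rintro ⟨ht, hle⟩
      refine ⟨ht, ?_⟩
      rw [← ENNReal.ofReal_toReal ha]
      exact ENNReal.ofReal_le_ofReal hle
  rw [hset, ← setLIntegral_congr (Ioo_ae_eq_Ioc (a := (0:ℝ)) (b := a.toReal)),
    lint_Ioo_ofReal hα hA, ENNReal.ofReal_toReal ha]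

lemma P1lt {α : ℝ} (hα : 0 < α) (a : ℝ≥0∞) :
    ∫⁻ t in Ioi (0:ℝ) ∩ {t : ℝ | ENNReal.ofReal t < a}, ENNReal.ofReal (t ^ (α - 1))
      = a ^ α / ENNReal.ofReal α := by
  rcases eq_or_ne a ⊤ with rfl | ha
  · have : Ioi (0:ℝ) ∩ {t : ℝ | ENNReal.ofReal t < ⊤} = Ioi 0 := by
      ext t; simp [ENNReal.ofReal_lt_top]
    rw [this, lint_Ioi_top hα, ENNReal.top_rpow_of_pos hα, ENNReal.top_div_of_ne_top
      ENNReal.ofReal_ne_top]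
  rcases eq_or_ne a 0 with rfl | ha0
  · have : Ioi (0:ℝ) ∩ {t : ℝ | ENNReal.ofReal t < 0} = ∅ := by simp
    rw [this, setLIntegral_empty, ENNReal.zero_rpow_of_pos hα, ENNReal.zero_div]
  have hA : 0 < a.toReal := ENNReal.toReal_pos ha0 ha
  have hset : Ioi (0:ℝ) ∩ {t : ℝ | ENNReal.ofReal t < a} = Ioo 0 a.toReal := by
    ext t; simp only [mem_inter_iff, mem_Ioi, mem_setOf_eq, mem_Ioo]
    constructor
    · rintro ⟨ht, hle⟩
      refine ⟨ht, ?_⟩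
      rw [← ENNReal.ofReal_toReal ha] at hle
      exact (ENNReal.ofReal_lt_ofReal_iff hA).mp hle
    · rintro ⟨ht, hle⟩
      refine ⟨ht, ?_⟩
      rw [← ENNReal.ofReal_toReal ha]
      exact (ENNReal.ofReal_lt_ofReal_iff hA).mpr hle
  rw [hset, lint_Ioo_ofReal hα hA, ENNReal.ofReal_toReal ha]

lemma swap_lemma {α β : ℝ} (hα : 0 < α) (hβ : 0 < β)
    (u v : ℝ → ℝ≥0∞) (hu : Antitone u)
    (huv : ∀ s t : ℝ, 0 < s → 0 < t → ENNReal.ofReal s < u t → ENNReal.ofReal t ≤ v s) :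
    ∫⁻ t in Ioi (0:ℝ), ENNReal.ofReal (t ^ (α - 1)) * u t ^ β
      ≤ (ENNReal.ofReal β / ENNReal.ofReal α) *
        ∫⁻ s in Ioi (0:ℝ), ENNReal.ofReal (s ^ (β - 1)) * v s ^ α := by
  set μ0 := volume.restrict (Ioi (0:ℝ)) with hμ0
  have hu_m : Measurable u := hu.measurable
  set W : ℝ → ℝ → ℝ≥0∞ := fun t s => ({z : ℝ × ℝ | ENNReal.ofReal z.2 < u z.1}.indicator
    (fun _ => (1:ℝ≥0∞)) (t, s)) with hW
  set F : ℝ → ℝ → ℝ≥0∞ := fun t s => ENNReal.ofReal (t ^ (α - 1)) *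
    (ENNReal.ofReal β * (ENNReal.ofReal (s ^ (β - 1)) * W t s)) with hF
  have hWset : MeasurableSet {z : ℝ × ℝ | ENNReal.ofReal z.2 < u z.1} :=
    measurableSet_lt (ENNReal.measurable_ofReal.comp measurable_snd) (hu_m.comp measurable_fst)
  have hβne : ENNReal.ofReal β ≠ 0 := by simp [hβ]
  -- Step 1 : rewrite LHS as double integral
  have step1 : ∫⁻ t in Ioi (0:ℝ), ENNReal.ofReal (t ^ (α - 1)) * u t ^ β
      = ∫⁻ t, (∫⁻ s, F t s ∂μ0) ∂μ0 := by
    refine lintegral_congr_ae ?_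
    filter_upwards [ae_restrict_mem measurableSet_Ioi] with t ht
    have hSm : MeasurableSet {s : ℝ | ENNReal.ofReal s < u t} :=
      measurableSet_lt ENNReal.measurable_ofReal measurable_const
    have hWind : ∀ s : ℝ, ENNReal.ofReal (s ^ (β - 1)) * W t s
        = ({s : ℝ | ENNReal.ofReal s < u t}.indicator
            (fun s => ENNReal.ofReal (s ^ (β - 1)))) s := by
      intro s
      by_cases h : ENNReal.ofReal s < u t
      · simp [hW, Set.indicator_of_mem, h, mem_setOf_eq]
      · simp [hW, Set.indicator_of_notMem, h, mem_setOf_eq]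
    calc ENNReal.ofReal (t ^ (α - 1)) * u t ^ β
        = ENNReal.ofReal (t ^ (α - 1)) * (ENNReal.ofReal β * (u t ^ β / ENNReal.ofReal β)) := by
          rw [ENNReal.mul_div_cancel hβne ENNReal.ofReal_ne_top]
      _ = ENNReal.ofReal (t ^ (α - 1)) * (ENNReal.ofReal β *
            ∫⁻ s, ENNReal.ofReal (s ^ (β - 1)) * W t s ∂μ0) := by
          congr 2
          rw [← P1lt hβ (u t)]
          simp_rw [hWind]
          rw [lintegral_indicator hSm, hμ0, Measure.restrict_restrict hSm, inter_comm]
      _ = ∫⁻ s, F t s ∂μ0 := by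
          rw [hF, lintegral_const_mul' _ _ ENNReal.ofReal_ne_top,
            lintegral_const_mul' _ _ ENNReal.ofReal_ne_top]
  -- Step 2 : swap
  have hFm : AEMeasurable (fun z : ℝ × ℝ => F z.1 z.2) (μ0.prod μ0) := by
    refine Measurable.aemeasurable ?_
    apply Measurable.mul
    · exact (measurable_fst.pow_const _).ennreal_ofReal
    apply Measurable.mul measurable_const
    apply Measurable.mul
    · exact (measurable_snd.pow_const _).ennreal_ofReal
    · exact (measurable_one.indicator hWset)
  have step2 : ∫⁻ t, (∫⁻ s, F t s ∂μ0) ∂μ0 = ∫⁻ s, (∫⁻ t, F t s ∂μ0) ∂μ0 :=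
    lintegral_lintegral_swap hFm
  -- Step 3 : bound inner integral
  have step3 : ∫⁻ s, (∫⁻ t, F t s ∂μ0) ∂μ0
      ≤ (ENNReal.ofReal β / ENNReal.ofReal α) *
        ∫⁻ s in Ioi (0:ℝ), ENNReal.ofReal (s ^ (β - 1)) * v s ^ α := by
    have hconst : (ENNReal.ofReal β / ENNReal.ofReal α) ≠ ⊤ :=
      (ENNReal.div_lt_top ENNReal.ofReal_ne_top (ENNReal.ofReal_pos.mpr hα).ne').ne
    rw [← lintegral_const_mul' _ _ hconst]
    refine lintegral_mono_ae ?_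
    filter_upwards [ae_restrict_mem measurableSet_Ioi] with s hs
    have hTm : MeasurableSet {t : ℝ | ENNReal.ofReal t ≤ v s} :=
      measurableSet_le ENNReal.measurable_ofReal measurable_const
    have key : ∫⁻ t, ENNReal.ofReal (t ^ (α - 1)) * W t s ∂μ0 ≤ v s ^ α / ENNReal.ofReal α := by
      calc ∫⁻ t, ENNReal.ofReal (t ^ (α - 1)) * W t s ∂μ0
          ≤ ∫⁻ t, ({t : ℝ | ENNReal.ofReal t ≤ v s}.indicator
              (fun t => ENNReal.ofReal (t ^ (α - 1)))) t ∂μ0 := by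
            refine lintegral_mono_ae ?_
            filter_upwards [ae_restrict_mem measurableSet_Ioi] with t ht
            by_cases h : ENNReal.ofReal s < u t
            · have hmem : t ∈ {t : ℝ | ENNReal.ofReal t ≤ v s} := huv s t hs ht h
              rw [Set.indicator_of_mem hmem]
              simp [hW, Set.indicator_of_mem, h, mem_setOf_eq]
            · simp only [hW]
              rw [Set.indicator_of_notMem (by simpa [mem_setOf_eq] using h)]
              simp
        _ = ∫⁻ t in {t : ℝ | ENNReal.ofReal t ≤ v s}, ENNReal.ofReal (t ^ (α - 1)) ∂μ0 :=
            lintegral_indicator hTm _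
        _ = ∫⁻ t in Ioi (0:ℝ) ∩ {t : ℝ | ENNReal.ofReal t ≤ v s},
              ENNReal.ofReal (t ^ (α - 1)) := by
            rw [hμ0, Measure.restrict_restrict hTm, inter_comm]
        _ = v s ^ α / ENNReal.ofReal α := P1le hα (v s)
    calc ∫⁻ t, F t s ∂μ0
        = (ENNReal.ofReal β * ENNReal.ofReal (s ^ (β - 1))) *
            ∫⁻ t, ENNReal.ofReal (t ^ (α - 1)) * W t s ∂μ0 := by
          rw [← lintegral_const_mul' _ _ (by finiteness)]
          refine lintegral_congr fun t => ?_
          simp only [hF]; ring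
      _ ≤ (ENNReal.ofReal β * ENNReal.ofReal (s ^ (β - 1))) * (v s ^ α / ENNReal.ofReal α) := by
          gcongr
      _ = ENNReal.ofReal β / ENNReal.ofReal α * (ENNReal.ofReal (s ^ (β - 1)) * v s ^ α) := by
          rw [ENNReal.div_eq_inv_mul, ENNReal.div_eq_inv_mul]; ring
  calc _ = _ := step1
    _ = _ := step2
    _ ≤ _ := step3

lemma mink {X : Type*} [MeasurableSpace X] (μ : Measure X) {r : ℝ} (hr : 1 ≤ r)
    (h : ℕ → X → ℝ≥0∞) (hm : ∀ j, AEMeasurable (h j) μ) :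
    ∑' j, (∫⁻ a, h j a ∂μ) ^ r ≤ (∫⁻ a, (∑' j, h j a ^ r) ^ (1/r) ∂μ) ^ r := by
  set T := ∫⁻ a, (∑' j, h j a ^ r) ^ (1/r) ∂μ with hT_def
  have hr0 : 0 < r := lt_of_lt_of_le one_pos hr
  have hj_le_T : ∀ j, ∫⁻ a, h j a ∂μ ≤ T := by
    intro j
    refine lintegral_mono fun a => ?_
    calc h j a = (h j a ^ r) ^ (1/r) := by
          rw [← ENNReal.rpow_mul, mul_one_div, div_self hr0.ne', ENNReal.rpow_one]
      _ ≤ (∑' j, h j a ^ r) ^ (1/r) :=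
          ENNReal.rpow_le_rpow (ENNReal.le_tsum j) (by positivity)
  rw [ENNReal.tsum_eq_iSup_sum]
  refine iSup_le fun F => ?_
  rcases eq_or_lt_of_le hr with rfl | hr1
  · simp only [ENNReal.rpow_one]
    calc ∑ j ∈ F, ∫⁻ a, h j a ∂μ = ∫⁻ a, ∑ j ∈ F, h j a ∂μ :=
          (lintegral_finset_sum' F fun j _ => hm j).symm
      _ ≤ T := by
          refine lintegral_mono fun a => ?_
          simp only [ENNReal.rpow_one, one_div_one]
          exact ENNReal.sum_le_tsum F
  by_cases hT : T = ⊤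
  · rw [hT, ENNReal.top_rpow_of_pos hr0]; exact le_top
  by_cases hinf : ∃ j ∈ F, ∫⁻ a, h j a ∂μ = ⊤
  · obtain ⟨j, _, hj⟩ := hinf
    exact absurd (eq_top_iff.mpr (hj ▸ hj_le_T j)) hT
  push_neg at hinf
  set A : ℕ → ℝ≥0∞ := fun j => ∫⁻ a, h j a ∂μ with hA_def
  set S : ℝ≥0∞ := (∑ j ∈ F, A j ^ r) ^ (1/r) with hS_def
  have hSr : S ^ r = ∑ j ∈ F, A j ^ r := by
    rw [hS_def, ← ENNReal.rpow_mul, one_div, inv_mul_cancel₀ hr0.ne', ENNReal.rpow_one]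
  have hSfin : S ≠ ⊤ := by
    rw [hS_def]
    refine ENNReal.rpow_ne_top_of_nonneg (by positivity) ?_
    exact (ENNReal.sum_lt_top.mpr fun j hj =>
      (ENNReal.rpow_lt_top_of_nonneg hr0.le (hinf j hj))).ne
  rcases eq_or_ne S 0 with hS0 | hS0
  · rw [← hSr, hS0, ENNReal.zero_rpow_of_pos hr0]; exact zero_le
  rw [← hSr]
  refine ENNReal.rpow_le_rpow ?_ hr0.le
  -- duality: S ≤ T
  have hr1' : 0 < r - 1 := by linarith
  set r' := Real.conjExponent r with hr'_def
  have hpq : r'.HolderConjugate r := (Real.HolderConjugate.conjExponent hr1).symm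
  set al : ℕ → ℝ≥0∞ := fun j => A j ^ (r-1) / S ^ (r-1) with hal_def
  have hSpow_ne0 : S ^ (r-1) ≠ 0 := by
    simp [ENNReal.rpow_eq_zero_iff, hS0, hSfin, hr1'.ne', not_lt.mpr hr1'.le]
  have hSpow_fin : S ^ (r-1) ≠ ⊤ := ENNReal.rpow_ne_top_of_nonneg hr1'.le hSfin
  have hal_fin : ∀ j ∈ F, al j ≠ ⊤ := by
    intro j hj
    rw [hal_def]
    exact (ENNReal.div_lt_top (ENNReal.rpow_ne_top_of_nonneg hr1'.le (hinf j hj)) hSpow_ne0).ne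
  have key1 : ∑ j ∈ F, al j * A j = S := by
    have e1 : ∀ j ∈ F, al j * A j = A j ^ r / S ^ (r-1) := by
      intro j _
      have hA1 : A j ^ (r-1) * A j = A j ^ r := by
        have h2 := ENNReal.rpow_add_of_nonneg (x := A j) (r-1) 1 hr1'.le zero_le_one
        rw [sub_add_cancel, ENNReal.rpow_one] at h2
        exact h2.symm
      simp only [hal_def, div_eq_mul_inv, mul_right_comm]
      rw [hA1]
    rw [Finset.sum_congr rfl e1]
    simp only [div_eq_mul_inv, ← Finset.sum_mul]
    rw [← hSr]
    have hSS : S ^ r = S ^ (r-1) * S := by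
      have h2 := ENNReal.rpow_add_of_nonneg (x := S) (r-1) 1 hr1'.le zero_le_one
      rw [sub_add_cancel, ENNReal.rpow_one] at h2
      exact h2
    rw [hSS, mul_comm (S ^ (r-1)) S, mul_assoc,
      ENNReal.mul_inv_cancel hSpow_ne0 hSpow_fin, mul_one]
  have key2 : ∑ j ∈ F, al j ^ r' = 1 := by
    have e2 : ∀ j ∈ F, al j ^ r' = A j ^ r / S ^ r := by
      intro j _
      rw [hal_def, ENNReal.div_rpow_of_nonneg _ _ hpq.nonneg, ← ENNReal.rpow_mul,
        ← ENNReal.rpow_mul]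
      have : (r - 1) * r' = r := by
        rw [hr'_def, Real.conjExponent]
        field_simp
      rw [this]
    rw [Finset.sum_congr rfl e2]
    simp only [div_eq_mul_inv, ← Finset.sum_mul]
    rw [← hSr, ENNReal.mul_inv_cancel (by simp [ENNReal.rpow_eq_zero_iff, hS0, hSfin, hr0.ne',
        not_lt.mpr hr0.le]) (ENNReal.rpow_ne_top_of_nonneg hr0.le hSfin)]
  calc S = ∑ j ∈ F, al j * A j := key1.symm
    _ = ∑ j ∈ F, ∫⁻ a, al j * h j a ∂μ := by
        refine Finset.sum_congr rfl fun j hj => ?_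
        rw [lintegral_const_mul' _ _ (hal_fin j hj)]
    _ = ∫⁻ a, ∑ j ∈ F, al j * h j a ∂μ :=
        (lintegral_finset_sum' F fun j _ => (hm j).const_mul _).symm
    _ ≤ T := by
        refine lintegral_mono fun a => ?_
        calc ∑ j ∈ F, al j * h j a
            ≤ (∑ j ∈ F, al j ^ r') ^ (1/r') * (∑ j ∈ F, h j a ^ r) ^ (1/r) :=
              ENNReal.inner_le_Lp_mul_Lq (s := F) al (fun j => h j a) hpq
          _ ≤ 1 * (∑' j, h j a ^ r) ^ (1/r) := by
              rw [key2, ENNReal.one_rpow]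
              exact mul_le_mul_right
                (ENNReal.rpow_le_rpow (ENNReal.sum_le_tsum F) (by positivity)) _
          _ = (∑' j, h j a ^ r) ^ (1/r) := one_mul _

section Aux
variable {n : ℕ} (ω f : EuclideanSpace ℝ (Fin n) → ℝ≥0∞)

lemma distFn_anti : Antitone (distFn ω f) :=
  fun _ _ hab => measure_mono fun _ hx => lt_of_le_of_lt hab hx

lemma rearr_anti : Antitone (rearr ω f) :=
  fun _ _ hab => sInf_le_sInf fun _ hs => le_trans hs hab

lemma K1 {a b : ℝ≥0∞} (h : b < rearr ω f a) : a < distFn ω f b := by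
  by_contra hc
  push_neg at hc
  exact absurd (sInf_le hc : rearr ω f a ≤ b) (not_le.mpr h)

lemma K2 {a b : ℝ≥0∞} (h : a < distFn ω f b) : b ≤ rearr ω f a := by
  refine le_sInf fun s hs => ?_
  by_contra hc
  push_neg at hc
  exact absurd (lt_of_lt_of_le h (le_trans (distFn_anti ω f hc.le) hs)) (lt_irrefl a)

lemma distFn_indicator (Ej : Set (EuclideanSpace ℝ (Fin n))) (s : ℝ≥0∞) :
    distFn ω (Ej.indicator f) s = wMeas ω (Ej ∩ {x | s < f x}) := by
  rw [distFn]
  congr 1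
  ext x
  by_cases hx : x ∈ Ej
  · simp [Set.indicator_of_mem hx, hx]
  · simp [Set.indicator_of_notMem hx, hx]

lemma overlap_bound (E : ℕ → Set (EuclideanSpace ℝ (Fin n)))
    (hE : ∀ j, MeasurableSet (E j)) (C : ℝ≥0∞)
    (hover : ∀ x, (∑' j, (E j).indicator (fun _ => (1 : ℝ≥0∞)) x) ≤ C)
    (A : Set (EuclideanSpace ℝ (Fin n))) :
    ∑' j, wMeas ω (E j ∩ A) ≤ C * wMeas ω A := by
  set B := toMeasurable (wMeas ω) A with hB
  have hBm : MeasurableSet B := measurableSet_toMeasurable _ _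
  have hAB : A ⊆ B := subset_toMeasurable _ _
  have hBA : wMeas ω B = wMeas ω A := measure_toMeasurable A
  calc ∑' j, wMeas ω (E j ∩ A)
      ≤ ∑' j, wMeas ω (E j ∩ B) :=
        ENNReal.tsum_le_tsum fun j => measure_mono (inter_subset_inter_right _ hAB)
    _ = ∑' j, ∫⁻ x, ω x ∂(volume.restrict (E j ∩ B)) := by
        refine tsum_congr fun j => ?_
        rw [wMeas, withDensity_apply _ ((hE j).inter hBm)]
    _ = ∫⁻ x, ω x ∂(Measure.sum fun j => volume.restrict (E j ∩ B)) :=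
        (lintegral_sum_measure _ _).symm
    _ ≤ ∫⁻ x, ω x ∂(C • volume.restrict B) := by
        refine lintegral_mono' (Measure.le_iff.mpr fun S hS => ?_) le_rfl
        rw [Measure.sum_apply _ hS, Measure.smul_apply, smul_eq_mul,
          Measure.restrict_apply hS]
        calc ∑' j, (volume.restrict (E j ∩ B)) S
            = ∑' j, volume (S ∩ (E j ∩ B)) := by
              refine tsum_congr fun j => ?_
              rw [Measure.restrict_apply hS]
          _ = ∑' j, ∫⁻ x, (S ∩ (E j ∩ B)).indicator (fun _ => (1:ℝ≥0∞)) x ∂volume := by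
              refine tsum_congr fun j => ?_
              exact (lintegral_indicator_one (hS.inter ((hE j).inter hBm))).symm
          _ = ∫⁻ x, ∑' j, (S ∩ (E j ∩ B)).indicator (fun _ => (1:ℝ≥0∞)) x ∂volume :=
              (lintegral_tsum fun j =>
                ((measurable_one.indicator (hS.inter ((hE j).inter hBm))).aemeasurable)).symm
          _ ≤ ∫⁻ x, (S ∩ B).indicator (fun _ => C) x ∂volume := by
              refine lintegral_mono fun x => ?_
              by_cases hx : x ∈ S ∩ B
              · rw [Set.indicator_of_mem hx]
                refine le_trans (ENNReal.tsum_le_tsum fun j => ?_) (hover x)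
                by_cases hxj : x ∈ S ∩ (E j ∩ B)
                · rw [Set.indicator_of_mem hxj, Set.indicator_of_mem hxj.2.1]
                · rw [Set.indicator_of_notMem hxj]
                  exact zero_le
              · rw [Set.indicator_of_notMem hx]
                have : ∀ j, (S ∩ (E j ∩ B)).indicator (fun _ => (1:ℝ≥0∞)) x = 0 := by
                  intro j
                  refine Set.indicator_of_notMem (fun hxj => hx ⟨hxj.1, hxj.2.2⟩) _
                simp [this]
          _ = C * volume (S ∩ B) := by
              rw [lintegral_indicator (hS.inter hBm), setLIntegral_const]
    _ = C * ∫⁻ x, ω x ∂(volume.restrict B) := by rw [lintegral_smul_measure, smul_eq_mul]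
    _ = C * wMeas ω A := by rw [← hBA, wMeas, withDensity_apply _ hBm]

lemma lorentz_pow {p q : ℝ} (hq : 1 ≤ q) (hqp : q ≤ p) :
    lorentzNorm ω (ENNReal.ofReal p) (ENNReal.ofReal q) f ^ p
      = ((ENNReal.ofReal q / ENNReal.ofReal p) *
          ∫⁻ t in Ioi (0:ℝ),
            ENNReal.ofReal (t ^ (q/p - 1)) * rearr ω f (ENNReal.ofReal t) ^ q) ^ (p/q) := by
  have hq0 : 0 < q := lt_of_lt_of_le one_pos hq
  have hp0 : 0 < p := lt_of_lt_of_le hq0 hqp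
  rw [lorentzNorm, if_neg ENNReal.ofReal_ne_top, ENNReal.toReal_ofReal hq0.le,
    ENNReal.toReal_ofReal hp0.le, ← ENNReal.rpow_mul,
    (by field_simp : 1/q*p = p/q)]
  congr 2
  refine setLIntegral_congr_fun measurableSet_Ioi (fun t ht => ?_)
  replace ht : (0:ℝ) < t := ht
  have htne : ENNReal.ofReal t ≠ 0 := by simp [ht]
  have h2 : ENNReal.ofReal t ^ ((1/p) * q) * (ENNReal.ofReal t)⁻¹
      = ENNReal.ofReal (t ^ (q/p - 1)) := by
    rw [← ENNReal.rpow_neg_one (ENNReal.ofReal t),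
      ← ENNReal.rpow_add _ _ htne ENNReal.ofReal_ne_top,
      ENNReal.ofReal_rpow_of_pos ht]
    congr 1
    ring
  rw [ENNReal.mul_rpow_of_nonneg _ _ hq0.le, ← ENNReal.rpow_mul, div_eq_mul_inv,
    mul_right_comm, h2]
end Aux

/-- If `1 ≤ q ≤ p < ∞` and `{E_j}` have overlap at most `C`, then
`∑_j ‖χ_{E_j} f‖_{L^{p,q}(ω)}^p ≤ C' ‖f‖_{L^{p,q}(ω)}^p`, with `C'` depending only
on `C, p, q`. -/
theorem stmt2 (p q : ℝ) (C : ℝ≥0∞) (hq : 1 ≤ q) (hqp : q ≤ p) (hC : C < ∞) :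
    ∃ C' : ℝ≥0∞, 0 < C' ∧ C' < ∞ ∧
      ∀ (n : ℕ) (ω f : EuclideanSpace ℝ (Fin n) → ℝ≥0∞)
        (E : ℕ → Set (EuclideanSpace ℝ (Fin n))),
        (∀ j, MeasurableSet (E j)) →
        (∀ x, (∑' j, (E j).indicator (fun _ => (1 : ℝ≥0∞)) x) ≤ C) →
        ∑' j, (lorentzNorm ω (ENNReal.ofReal p) (ENNReal.ofReal q)
            ((E j).indicator f)) ^ p
          ≤ C' * (lorentzNorm ω (ENNReal.ofReal p) (ENNReal.ofReal q) f) ^ p := by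
  have hq0 : 0 < q := lt_of_lt_of_le one_pos hq
  have hp0 : 0 < p := lt_of_lt_of_le hq0 hqp
  have hqp0 : 0 < q/p := div_pos hq0 hp0
  have hr1 : 1 ≤ p/q := (one_le_div hq0).mpr hqp
  have hr0 : 0 < p/q := lt_of_lt_of_le one_pos hr1
  refine ⟨C + 1, lt_of_lt_of_le one_pos le_add_self,
    ENNReal.add_lt_top.mpr ⟨hC, ENNReal.one_lt_top⟩, ?_⟩
  intro n ω f E hE hover
  set μ0 : Measure ℝ := volume.restrict (Ioi (0:ℝ)) with hμ0
  set I : (EuclideanSpace ℝ (Fin n) → ℝ≥0∞) → ℝ≥0∞ := fun g =>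
    ∫⁻ t, ENNReal.ofReal (t ^ (q/p - 1)) * rearr ω g (ENNReal.ofReal t) ^ q ∂μ0 with hI
  set Φ : (EuclideanSpace ℝ (Fin n) → ℝ≥0∞) → ℝ≥0∞ := fun g =>
    ∫⁻ s, ENNReal.ofReal (s ^ (q - 1)) * distFn ω g (ENNReal.ofReal s) ^ (q/p) ∂μ0 with hPhi
  have hRanti : ∀ g : EuclideanSpace ℝ (Fin n) → ℝ≥0∞,
      Antitone fun t : ℝ => rearr ω g (ENNReal.ofReal t) :=
    fun g => (rearr_anti ω g).comp_monotone fun a b hab => ENNReal.ofReal_le_ofReal hab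
  have hNanti : ∀ g : EuclideanSpace ℝ (Fin n) → ℝ≥0∞,
      Antitone fun s : ℝ => distFn ω g (ENNReal.ofReal s) :=
    fun g => (distFn_anti ω g).comp_monotone fun a b hab => ENNReal.ofReal_le_ofReal hab
  have hcu : ENNReal.ofReal q / ENNReal.ofReal (q/p) = ENNReal.ofReal p := by
    rw [← ENNReal.ofReal_div_of_pos hqp0]
    congr 1
    field_simp
  have hcd : ENNReal.ofReal (q/p) / ENNReal.ofReal q = ENNReal.ofReal (1/p) := by
    rw [← ENNReal.ofReal_div_of_pos hq0]
    congr 1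
    field_simp
  have upb : ∀ g : EuclideanSpace ℝ (Fin n) → ℝ≥0∞, I g ≤ ENNReal.ofReal p * Φ g := by
    intro g
    have := swap_lemma hqp0 hq0 (fun t => rearr ω g (ENNReal.ofReal t))
      (fun s => distFn ω g (ENNReal.ofReal s)) (hRanti g)
      (fun s t _ _ hlt => (K1 ω g hlt).le)
    rwa [hcu] at this
  have downb : ∀ g : EuclideanSpace ℝ (Fin n) → ℝ≥0∞, Φ g ≤ ENNReal.ofReal (1/p) * I g := by
    intro g
    have := swap_lemma hq0 hqp0 (fun s => distFn ω g (ENNReal.ofReal s))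
      (fun t => rearr ω g (ENNReal.ofReal t)) (hNanti g)
      (fun s t _ _ hlt => K2 ω g hlt)
    rwa [hcd] at this
  set h : ℕ → ℝ → ℝ≥0∞ := fun j s =>
    ENNReal.ofReal (s ^ (q - 1)) *
      distFn ω ((E j).indicator f) (ENNReal.ofReal s) ^ (q/p) with hh
  have hm : ∀ j, AEMeasurable (h j) μ0 := by
    intro j
    refine Measurable.aemeasurable (Measurable.mul ?_ ?_)
    · exact (measurable_id.pow_const _).ennreal_ofReal
    · have : Antitone fun s : ℝ =>
          distFn ω ((E j).indicator f) (ENNReal.ofReal s) ^ (q/p) :=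
        fun a b hab => ENNReal.rpow_le_rpow (hNanti _ hab) hqp0.le
      exact this.measurable
  have hPhij : ∀ j, Φ ((E j).indicator f) = ∫⁻ s, h j s ∂μ0 := fun j => rfl
  have hsum : ∀ s : ℝ, (∑' j, h j s ^ (p/q)) ^ (q/p)
      ≤ C ^ (q/p) *
        (ENNReal.ofReal (s ^ (q-1)) * distFn ω f (ENNReal.ofReal s) ^ (q/p)) := by
    intro s
    have e1 : ∀ j, h j s ^ (p/q)
        = ENNReal.ofReal (s ^ (q-1)) ^ (p/q) *
          distFn ω ((E j).indicator f) (ENNReal.ofReal s) := by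
      intro j
      rw [hh]
      dsimp only
      rw [ENNReal.mul_rpow_of_nonneg _ _ hr0.le, ← ENNReal.rpow_mul,
        (by field_simp : (q/p)*(p/q) = 1), ENNReal.rpow_one]
    calc (∑' j, h j s ^ (p/q)) ^ (q/p)
        = (ENNReal.ofReal (s ^ (q-1)) ^ (p/q) *
            ∑' j, distFn ω ((E j).indicator f) (ENNReal.ofReal s)) ^ (q/p) := by
          rw [tsum_congr e1, ENNReal.tsum_mul_left]
      _ ≤ (ENNReal.ofReal (s ^ (q-1)) ^ (p/q) *
            (C * distFn ω f (ENNReal.ofReal s))) ^ (q/p) := by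
          refine ENNReal.rpow_le_rpow (mul_le_mul_right ?_ _) hqp0.le
          have e2 : ∀ j, distFn ω ((E j).indicator f) (ENNReal.ofReal s)
              = wMeas ω (E j ∩ {x | ENNReal.ofReal s < f x}) :=
            fun j => distFn_indicator ω f (E j) _
          rw [tsum_congr e2]
          exact overlap_bound ω E hE C hover _
      _ = C ^ (q/p) *
            (ENNReal.ofReal (s ^ (q-1)) * distFn ω f (ENNReal.ofReal s) ^ (q/p)) := by
          rw [ENNReal.mul_rpow_of_nonneg _ _ hqp0.le,
            ENNReal.mul_rpow_of_nonneg _ _ hqp0.le, ← ENNReal.rpow_mul,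
            (by field_simp : (p/q)*(q/p) = 1), ENNReal.rpow_one]
          ring
  have hmk := mink μ0 hr1 h hm
  have hT : (∫⁻ s, (∑' j, h j s ^ (p/q)) ^ (1/(p/q)) ∂μ0) ^ (p/q) ≤ C * Φ f ^ (p/q) := by
    calc (∫⁻ s, (∑' j, h j s ^ (p/q)) ^ (1/(p/q)) ∂μ0) ^ (p/q)
        ≤ (∫⁻ s, C ^ (q/p) * (ENNReal.ofReal (s^(q-1)) *
            distFn ω f (ENNReal.ofReal s) ^ (q/p)) ∂μ0) ^ (p/q) := by
          refine ENNReal.rpow_le_rpow (lintegral_mono fun s => ?_) hr0.le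
          rw [one_div_div]
          exact hsum s
      _ = (C ^ (q/p) * Φ f) ^ (p/q) := by
          rw [lintegral_const_mul' _ _ (ENNReal.rpow_ne_top_of_nonneg hqp0.le hC.ne)]
      _ = C * Φ f ^ (p/q) := by
          rw [ENNReal.mul_rpow_of_nonneg _ _ hr0.le, ← ENNReal.rpow_mul,
            (by field_simp : (q/p)*(p/q) = 1), ENNReal.rpow_one]
  have hIf : ∀ g : EuclideanSpace ℝ (Fin n) → ℝ≥0∞,
      lorentzNorm ω (ENNReal.ofReal p) (ENNReal.ofReal q) g ^ p
        = (ENNReal.ofReal (q/p) * I g) ^ (p/q) := by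
    intro g
    rw [lorentz_pow ω g hq hqp, ENNReal.ofReal_div_of_pos hp0]
    try rfl
  have hpinv : ENNReal.ofReal p ^ (p/q) * ENNReal.ofReal (1/p) ^ (p/q) = 1 := by
    rw [← ENNReal.mul_rpow_of_nonneg _ _ hr0.le, ← ENNReal.ofReal_mul hp0.le,
      mul_one_div, div_self hp0.ne', ENNReal.ofReal_one, ENNReal.one_rpow]
  calc ∑' j, lorentzNorm ω (ENNReal.ofReal p) (ENNReal.ofReal q) ((E j).indicator f) ^ p
      = ∑' j, (ENNReal.ofReal (q/p) * I ((E j).indicator f)) ^ (p/q) :=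
        tsum_congr fun j => hIf _
    _ ≤ ∑' j, (ENNReal.ofReal (q/p) *
          (ENNReal.ofReal p * (∫⁻ s, h j s ∂μ0))) ^ (p/q) := by
        refine ENNReal.tsum_le_tsum fun j =>
          ENNReal.rpow_le_rpow (mul_le_mul_right ?_ _) hr0.le
        rw [← hPhij j]
        exact upb _
    _ = (ENNReal.ofReal (q/p) * ENNReal.ofReal p) ^ (p/q) *
          ∑' j, (∫⁻ s, h j s ∂μ0) ^ (p/q) := by
        rw [← ENNReal.tsum_mul_left]
        refine tsum_congr fun j => ?_
        rw [← mul_assoc, ENNReal.mul_rpow_of_nonneg _ _ hr0.le]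
    _ ≤ (ENNReal.ofReal (q/p) * ENNReal.ofReal p) ^ (p/q) * (C * Φ f ^ (p/q)) :=
        mul_le_mul_right (le_trans hmk hT) _
    _ ≤ (ENNReal.ofReal (q/p) * ENNReal.ofReal p) ^ (p/q) *
          (C * (ENNReal.ofReal (1/p) * I f) ^ (p/q)) :=
        mul_le_mul_right (mul_le_mul_right
          (ENNReal.rpow_le_rpow (downb f) hr0.le) _) _
    _ = C * ((ENNReal.ofReal (q/p) * I f) ^ (p/q)) := by
        simp only [ENNReal.mul_rpow_of_nonneg _ _ hr0.le]
        calc ENNReal.ofReal (q/p) ^ (p/q) * ENNReal.ofReal p ^ (p/q) *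
              (C * (ENNReal.ofReal (1/p) ^ (p/q) * I f ^ (p/q)))
            = (ENNReal.ofReal p ^ (p/q) * ENNReal.ofReal (1/p) ^ (p/q)) *
              (C * (ENNReal.ofReal (q/p) ^ (p/q) * I f ^ (p/q))) := by ring
          _ = C * (ENNReal.ofReal (q/p) ^ (p/q) * I f ^ (p/q)) := by
              rw [hpinv, one_mul]
    _ = C * lorentzNorm ω (ENNReal.ofReal p) (ENNReal.ofReal q) f ^ p := by rw [hIf f]
    _ ≤ (C + 1) * lorentzNorm ω (ENNReal.ofReal p) (ENNReal.ofReal q) f ^ p :=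
        mul_le_mul_left le_self_add _
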